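/- Let k be a field, n ≥ 4, and let ML_{Circ_n} be the quotient of the free metabelian Lie algebra L₍₂₎(Z/nZ) over k by the Lie ideal generated by the brackets ⁅i+1, i⁆ for all i ∈ Z/nZ. Then for every integer j with 2 ≤ j ≤ n−2, the image in ML_{Circ_n} of the left-normed bracket [j, 0, j+1, j+2, ..., n−1] is zero. -/

import Mathlib

/-- The free metabelian Lie algebra on `X` over `k`. -/
abbrev FreeMetabelianLieAlgebra (k : Type u) [Field k] (X : Type v) :=
  FreeLieAlgebra k X ⧸ LieAlgebra.derivedSeries k (FreeLieAlgebra k X) 2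

/-- The image of a generator `x ∈ X` in the free metabelian Lie algebra. -/
noncomputable def FreeMetabelianLieAlgebra.of (k : Type u) [Field k] {X : Type v} (x : X) :
    FreeMetabelianLieAlgebra k X :=
  LieSubmodule.Quotient.mk (N := LieAlgebra.derivedSeries k (FreeLieAlgebra k X) 2)
    (FreeLieAlgebra.of k x)

section Aux

/-- The free metabelian Lie algebra is metabelian. -/
lemma FreeMetabelianLieAlgebra.metabelian {k : Type u} [Field k] {X : Type v}
    (a b x y : FreeMetabelianLieAlgebra k X) :
    ⁅⁅a, b⁆, ⁅x, y⁆⁆ = 0 := by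
  obtain ⟨a, rfl⟩ := LieSubmodule.Quotient.surjective_mk'
    (N := LieAlgebra.derivedSeries k (FreeLieAlgebra k X) 2) a
  obtain ⟨b, rfl⟩ := LieSubmodule.Quotient.surjective_mk'
    (N := LieAlgebra.derivedSeries k (FreeLieAlgebra k X) 2) b
  obtain ⟨x, rfl⟩ := LieSubmodule.Quotient.surjective_mk'
    (N := LieAlgebra.derivedSeries k (FreeLieAlgebra k X) 2) x
  obtain ⟨y, rfl⟩ := LieSubmodule.Quotient.surjective_mk'
    (N := LieAlgebra.derivedSeries k (FreeLieAlgebra k X) 2) y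
  have : ⁅⁅a, b⁆, ⁅x, y⁆⁆ ∈ LieAlgebra.derivedSeries k (FreeLieAlgebra k X) 2 := by
    rw [show (2:ℕ) = 1 + 1 from rfl, LieAlgebra.derivedSeries_def,
      LieAlgebra.derivedSeriesOfIdeal_succ]
    refine LieSubmodule.lie_mem_lie ?_ ?_ <;>
    · rw [LieAlgebra.derivedSeriesOfIdeal_succ, LieAlgebra.derivedSeriesOfIdeal_zero]
      exact LieSubmodule.lie_mem_lie trivial trivial
  have h := (LieSubmodule.Quotient.mk_eq_zero' (N := LieAlgebra.derivedSeries k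
    (FreeLieAlgebra k X) 2) (m := ⁅⁅a, b⁆, ⁅x, y⁆⁆)).2 this
  simpa using h

/-- Metabelian-ness descends to any quotient. -/
lemma FreeMetabelianLieAlgebra.quot_metabelian {k : Type u} [Field k] {X : Type v}
    (I : LieIdeal k (FreeMetabelianLieAlgebra k X))
    (a b x y : FreeMetabelianLieAlgebra k X ⧸ I) : ⁅⁅a, b⁆, ⁅x, y⁆⁆ = 0 := by
  obtain ⟨a, rfl⟩ := LieSubmodule.Quotient.surjective_mk' (N := I) a
  obtain ⟨b, rfl⟩ := LieSubmodule.Quotient.surjective_mk' (N := I) b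
  obtain ⟨x, rfl⟩ := LieSubmodule.Quotient.surjective_mk' (N := I) x
  obtain ⟨y, rfl⟩ := LieSubmodule.Quotient.surjective_mk' (N := I) y
  have : (LieSubmodule.Quotient.mk' I) ⁅⁅a, b⁆, ⁅x, y⁆⁆ = 0 := by
    rw [FreeMetabelianLieAlgebra.metabelian]; simp
  simpa using this

/-- Folding brackets starting from `0` gives `0`. -/
lemma foldl_lie_zero {L : Type*} [LieRing L] (l : List L) :
    l.foldl (fun a b => ⁅a, b⁆) 0 = 0 := by
  induction l with
  | nil => rfl
  | cons a l ih => simpa using ih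

/-- In a metabelian Lie ring, when folding brackets starting from a commutator,
the head of the list can be moved to the end. -/
lemma foldl_lie_rotate {L : Type*} [LieRing L]
    (hmeta : ∀ a b x y : L, ⁅⁅a, b⁆, ⁅x, y⁆⁆ = 0) :
    ∀ (l : List L) (x y a : L),
      (a :: l).foldl (fun a b => ⁅a, b⁆) ⁅x, y⁆ =
        (l ++ [a]).foldl (fun a b => ⁅a, b⁆) ⁅x, y⁆ := by
  have swap : ∀ x y a b : L, ⁅⁅⁅x, y⁆, a⁆, b⁆ = ⁅⁅⁅x, y⁆, b⁆, a⁆ := by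
    intro x y a b
    have h : ⁅(⁅x, y⁆), ⁅a, b⁆⁆ = ⁅⁅⁅x, y⁆, a⁆, b⁆ + ⁅a, ⁅⁅x, y⁆, b⁆⁆ := leibniz_lie _ _ _
    rw [hmeta] at h
    have := h.symm
    rw [← lie_skew a ⁅⁅x, y⁆, b⁆] at this
    linear_combination (norm := abel) this
  intro l
  induction l with
  | nil => intro x y a; rfl
  | cons b l ih =>
    intro x y a
    show (l.foldl (fun a b => ⁅a, b⁆) ⁅⁅⁅x, y⁆, a⁆, b⁆) = _
    rw [swap]
    have h1 : (a :: l).foldl (fun a b => ⁅a, b⁆) ⁅⁅x, y⁆, b⁆ =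
        (l ++ [a]).foldl (fun a b => ⁅a, b⁆) ⁅⁅x, y⁆, b⁆ := ih ⁅x, y⁆ b a
    simpa using h1

/-- `mk` commutes with folding brackets. -/
lemma mk_foldl_lie {k : Type u} [Field k] {L : Type v} [LieRing L] [LieAlgebra k L]
    (I : LieIdeal k L) :
    ∀ (l : List L) (s : L),
      LieSubmodule.Quotient.mk (N := I) (l.foldl (fun a b => ⁅a, b⁆) s) =
        (l.map (LieSubmodule.Quotient.mk (N := I))).foldl (fun a b => ⁅a, b⁆)
          (LieSubmodule.Quotient.mk (N := I) s) := by
  intro l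
  induction l with
  | nil => intro s; rfl
  | cons a l ih =>
    intro s
    show LieSubmodule.Quotient.mk (N := I) (l.foldl (fun a b => ⁅a, b⁆) ⁅s, a⁆) = _
    rw [ih]
    rfl

end Aux

/-- In the partial commutative metabelian Lie algebra related to the circuit `Circ_n`
(`n ≥ 4`), i.e. the quotient of `L₍₂₎(ℤ/nℤ)` by the ideal generated by the brackets
`⁅i+1, i⁆`, the image of the left-normed bracket `[j, 0, j+1, j+2, …, n−1]` is zero for
every `2 ≤ j ≤ n − 2`. -/
theorem circuit_gsbasis_relation (k : Type u) [Field k] (n : ℕ) (hn : 4 ≤ n)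
    (j : ℕ) (hj2 : 2 ≤ j) (hjn : j ≤ n - 2) :
    letI I : LieIdeal k (FreeMetabelianLieAlgebra k (ZMod n)) :=
      LieSubmodule.lieSpan k (FreeMetabelianLieAlgebra k (ZMod n))
        {x | ∃ i : ZMod n,
          x = ⁅FreeMetabelianLieAlgebra.of k (i + 1), FreeMetabelianLieAlgebra.of k i⁆}
    LieSubmodule.Quotient.mk (N := I)
        ((((0 : ZMod n) ::
              (List.range (n - 1 - j)).map (fun t => ((j + 1 + t : ℕ) : ZMod n))).map
            (FreeMetabelianLieAlgebra.of k)).foldl (fun a b => ⁅a, b⁆)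
          (FreeMetabelianLieAlgebra.of k ((j : ℕ) : ZMod n))) = 0 := by
  set I : LieIdeal k (FreeMetabelianLieAlgebra k (ZMod n)) :=
      LieSubmodule.lieSpan k (FreeMetabelianLieAlgebra k (ZMod n))
        {x | ∃ i : ZMod n,
          x = ⁅FreeMetabelianLieAlgebra.of k (i + 1), FreeMetabelianLieAlgebra.of k i⁆}
    with hI
  set Q := FreeMetabelianLieAlgebra k (ZMod n) ⧸ I
  set c : ℕ → Q := fun m =>
    LieSubmodule.Quotient.mk (N := I) (FreeMetabelianLieAlgebra.of k ((m : ℕ) : ZMod n)) with hc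
  -- the circuit relations in the quotient
  have rel : ∀ m : ℕ, ⁅c (m + 1), c m⁆ = 0 := by
    intro m
    have hmem : ⁅FreeMetabelianLieAlgebra.of k (((m : ZMod n)) + 1),
        FreeMetabelianLieAlgebra.of k ((m : ZMod n))⁆ ∈ I :=
      LieSubmodule.subset_lieSpan ⟨(m : ZMod n), rfl⟩
    have h0 : LieSubmodule.Quotient.mk (N := I)
        ⁅FreeMetabelianLieAlgebra.of k (((m : ZMod n)) + 1),
         FreeMetabelianLieAlgebra.of k ((m : ZMod n))⁆ = 0 :=
      (LieSubmodule.Quotient.mk_eq_zero' (N := I)).2 hmem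
    rw [LieSubmodule.Quotient.mk_bracket] at h0
    have hcast : (((m + 1 : ℕ)) : ZMod n) = (m : ZMod n) + 1 := by push_cast; ring
    simpa [hc, hcast] using h0
  have hmeta := FreeMetabelianLieAlgebra.quot_metabelian (X := ZMod n) I
  -- base case bracket
  have base : ⁅c (n - 1), c 0⁆ = 0 := by
    have h := rel (n - 1)
    have h1 : (n - 1 + 1 : ℕ) = n := by omega
    rw [h1] at h
    have h2 : c n = c 0 := by
      simp only [hc]
      norm_num
    rw [h2] at h
    rw [← lie_skew, h, neg_zero]
  -- the shifting identity
  have shift : ∀ m : ℕ, ⁅⁅c m, c 0⁆, c (m + 1)⁆ = ⁅⁅c (m + 1), c 0⁆, c m⁆ := by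
    intro m
    have hlb : ⁅c m, ⁅c 0, c (m + 1)⁆⁆ =
        ⁅⁅c m, c 0⁆, c (m + 1)⁆ + ⁅c 0, ⁅c m, c (m + 1)⁆⁆ := leibniz_lie _ _ _
    have h1 : ⁅c m, c (m + 1)⁆ = 0 := by
      rw [← lie_skew, rel]; simp
    rw [h1, lie_zero, add_zero] at hlb
    rw [← hlb]
    have e1 : ⁅c 0, c (m + 1)⁆ = -⁅c (m + 1), c 0⁆ := by rw [lie_skew]
    rw [e1, lie_neg, lie_skew]
  -- main downward induction
  have key : ∀ (d m : ℕ) (r : List Q), m + d = n - 1 →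
      (((List.range d).map (fun t => c (m + 1 + t))) ++ r).foldl (fun a b => ⁅a, b⁆)
        ⁅c m, c 0⁆ = 0 := by
    intro d
    induction d with
    | zero =>
      intro m r hm
      have : m = n - 1 := by omega
      subst this
      simpa [base] using foldl_lie_zero (L := Q) r
    | succ d ih =>
      intro m r hm
      have hcomp : (fun t => c (m + 1 + t)) ∘ Nat.succ = fun t => c (m + 2 + t) := by
        funext t
        show c (m + 1 + (t + 1)) = c (m + 2 + t)
        congr 1
        omega
      have hrange : (List.range (d + 1)).map (fun t => c (m + 1 + t)) =
          c (m + 1) :: (List.range d).map (fun t => c (m + 2 + t)) := by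
        rw [List.range_succ_eq_map, List.map_cons, List.map_map, hcomp, Nat.add_zero]
      rw [hrange]
      show ((List.range d).map (fun t => c (m + 2 + t)) ++ r).foldl (fun a b => ⁅a, b⁆)
          ⁅⁅c m, c 0⁆, c (m + 1)⁆ = 0
      rw [shift m]
      have hrot := foldl_lie_rotate hmeta
        ((List.range d).map (fun t => c (m + 2 + t)) ++ r) (c (m + 1)) (c 0) (c m)
      have : (((List.range d).map (fun t => c (m + 2 + t)) ++ r)).foldl (fun a b => ⁅a, b⁆)
          ⁅⁅c (m + 1), c 0⁆, c m⁆ =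
          ((((List.range d).map (fun t => c (m + 2 + t)) ++ r)) ++ [c m]).foldl
            (fun a b => ⁅a, b⁆) ⁅c (m + 1), c 0⁆ := by
        exact hrot
      rw [this, List.append_assoc]
      have harg : (List.range d).map (fun t => c (m + 2 + t)) =
          (List.range d).map (fun t => c (m + 1 + 1 + t)) := by
        apply List.map_congr_left; intro t _; exact congrArg c (by omega)
      rw [harg]
      exact ih (m + 1) (r ++ [c m]) (by omega)
  -- assemble
  rw [mk_foldl_lie]
  simp only [List.map_cons, List.map_map]
  have hof0 : LieSubmodule.Quotient.mk (N := I) (FreeMetabelianLieAlgebra.of k (0 : ZMod n))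
      = c 0 := by
    rw [hc]; norm_num
  have hmap : (List.range (n - 1 - j)).map
      ((LieSubmodule.Quotient.mk (N := I)) ∘ (FreeMetabelianLieAlgebra.of k) ∘
        (fun t => ((j + 1 + t : ℕ) : ZMod n))) =
      (List.range (n - 1 - j)).map (fun t => c (j + 1 + t)) := rfl
  show ((LieSubmodule.Quotient.mk (N := I) (FreeMetabelianLieAlgebra.of k (0 : ZMod n))) ::
      (List.range (n - 1 - j)).map
      ((LieSubmodule.Quotient.mk (N := I)) ∘ (FreeMetabelianLieAlgebra.of k) ∘
        (fun t => ((j + 1 + t : ℕ) : ZMod n)))).foldl (fun a b => ⁅a, b⁆) (c j) = 0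
  rw [hof0, hmap]
  show ((List.range (n - 1 - j)).map (fun t => c (j + 1 + t))).foldl (fun a b => ⁅a, b⁆)
      ⁅c j, c 0⁆ = 0
  have := key (n - 1 - j) j [] (by omega)
  simpa using this
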